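/- Let λ = (λ_1,…,λ_n) be a partition of n, set d_i = λ_i + n − i and P = {d_1,…,d_n}. Then for every i with 1 ≤ i ≤ n, the cardinality of the set {j : 1 ≤ j ≤ d_i and d_i − j ∉ P} equals λ_i. -/

import Mathlib

/-- `d_i = λ_i + n − i`, with rows indexed by `i : Fin n` (so `i` stands for row `i+1`). -/
def dSeq (n : ℕ) (lam : Fin n → ℕ) (i : Fin n) : ℕ := lam i + (n - 1 - (i : ℕ))

/-- `P = {d_1, …, d_n}`. -/
def dSet (n : ℕ) (lam : Fin n → ℕ) : Finset ℕ := Finset.image (dSeq n lam) Finset.univ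

/-- Lemma 1: for a partition `λ` of `n`, the number of `j` with `1 ≤ j ≤ d_i` and
`d_i − j ∉ P` equals `λ_i`. -/
theorem card_filter_not_mem_dSet_eq (n : ℕ) (lam : Fin n → ℕ)
    (hanti : Antitone lam) (hsum : ∑ i, lam i = n) (i : Fin n) :
    ((Finset.Icc 1 (dSeq n lam i)).filter
      (fun j => dSeq n lam i - j ∉ dSet n lam)).card = lam i := by
  classical
  have hstrict : StrictAnti (dSeq n lam) := by
    intro a b hab
    have h1 : lam b ≤ lam a := hanti hab.le
    have hb := b.isLt
    have hab' : (a : ℕ) < b := hab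
    unfold dSeq; omega
  set d := dSeq n lam i with hd
  have hdval : d = lam i + (n - 1 - (i : ℕ)) := rfl
  have hcard : ((Finset.Icc 1 d).filter (fun j => d - j ∉ dSet n lam)).card
      = ((Finset.range d).filter (fun m => m ∉ dSet n lam)).card := by
    apply Finset.card_bij (fun j _ => d - j)
    · intro j hj
      simp only [Finset.mem_filter, Finset.mem_Icc] at hj
      simp only [Finset.mem_filter, Finset.mem_range]
      exact ⟨by omega, hj.2⟩
    · intro a ha b hb hab
      simp only [Finset.mem_filter, Finset.mem_Icc] at ha hb
      omega
    · intro m hm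
      simp only [Finset.mem_filter, Finset.mem_range] at hm
      refine ⟨d - m, ?_, by omega⟩
      simp only [Finset.mem_filter, Finset.mem_Icc]
      exact ⟨⟨by omega, by omega⟩, by rw [show d - (d - m) = m by omega]; exact hm.2⟩
  rw [hcard]
  have hsplit := Finset.card_filter_add_card_filter_not
    (s := Finset.range d) (p := fun m => m ∈ dSet n lam)
  rw [Finset.card_range] at hsplit
  have hmem : ((Finset.range d).filter (fun m => m ∈ dSet n lam)).card = n - 1 - (i : ℕ) := by
    have heq : (Finset.range d).filter (fun m => m ∈ dSet n lam)
        = Finset.image (dSeq n lam) (Finset.Ioi i) := by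
      ext m
      simp only [Finset.mem_filter, Finset.mem_range, Finset.mem_image, Finset.mem_Ioi, dSet,
        Finset.mem_image, Finset.mem_univ, true_and]
      constructor
      · rintro ⟨hlt, k, rfl⟩
        exact ⟨k, hstrict.lt_iff_gt.mp hlt, rfl⟩
      · rintro ⟨k, hk, rfl⟩
        exact ⟨hstrict hk, k, rfl⟩
    rw [heq, Finset.card_image_of_injective _ hstrict.injective, Fin.card_Ioi]
  omega
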